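/- Let 𝔠 ⊆ 𝔤 be a reducing Lie subalgebra, i.e. [s♯α, s♯β] ∈ 𝔠 for all α, β ∈ ann(𝔠). Then the subset 𝔠̂ := {(ξ + s♯α, ξ − s♯α) : ξ ∈ 𝔠, α ∈ ann(𝔠)} is a Lie subalgebra of the direct-sum Lie algebra 𝔤 ⊕ 𝔤 (it is a linear subspace closed under the componentwise Lie bracket). -/

import Mathlib

/-! Prod of Lie algebras, with componentwise bracket (the direct-sum Lie algebra 𝔤 ⊕ 𝔤). -/

section ProdLie
variable {L M : Type*} [LieRing L] [LieRing M]

instance prodBracket : Bracket (L × M) (L × M) :=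
  ⟨fun p q => (⁅p.1, q.1⁆, ⁅p.2, q.2⁆)⟩

@[simp] theorem prod_bracket_fst (p q : L × M) : ⁅p, q⁆.1 = ⁅p.1, q.1⁆ := rfl
@[simp] theorem prod_bracket_snd (p q : L × M) : ⁅p, q⁆.2 = ⁅p.2, q.2⁆ := rfl

instance prodLieRing : LieRing (L × M) where
  toBracket := prodBracket
  add_lie x y z := by ext <;> simp [add_lie]
  lie_add x y z := by ext <;> simp [lie_add]
  lie_self x := by ext <;> simp
  leibniz_lie x y z := by
    ext <;> simp only [prod_bracket_fst, prod_bracket_snd, Prod.fst_add, Prod.snd_add] <;>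
      exact leibniz_lie _ _ _

instance prodLieAlgebra {R : Type*} [CommRing R] [LieAlgebra R L] [LieAlgebra R M] :
    LieAlgebra R (L × M) where
  lie_smul t x y := by ext <;> simp

end ProdLie

/-- The coadjoint action of `𝔤` on `𝔤*`: `(ad*_ξ α)(η) = -α ⁅ξ, η⁆`. -/
noncomputable def coad {L : Type*} [LieRing L] [LieAlgebra ℝ L] (ξ : L)
    (α : Module.Dual ℝ L) : Module.Dual ℝ L :=
  - (α ∘ₗ (LieAlgebra.ad ℝ L ξ))

/-- If `𝔠 ⊆ 𝔤` is a reducing Lie subalgebra, then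
`𝔠̂ = {(ξ + s♯α, ξ − s♯α) : ξ ∈ 𝔠, α ∈ ann(𝔠)}` is a Lie subalgebra of `𝔤 ⊕ 𝔤`. -/
theorem reducing_hat_isLieSubalgebra {L : Type*} [LieRing L] [LieAlgebra ℝ L]
    (s : Module.Dual ℝ L →ₗ[ℝ] L)
    (hsym : ∀ α β : Module.Dual ℝ L, β (s α) = α (s β))
    (hinv : ∀ (ξ : L) (α : Module.Dual ℝ L), ⁅ξ, s α⁆ = s (coad ξ α))
    (c : LieSubalgebra ℝ L)
    (hred : ∀ α β : Module.Dual ℝ L, (∀ x ∈ c, α x = 0) → (∀ x ∈ c, β x = 0) →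
      ⁅s α, s β⁆ ∈ c) :
    ∃ K : LieSubalgebra ℝ (L × L),
      (K : Set (L × L)) =
        {p : L × L | ∃ ξ ∈ c, ∃ α : Module.Dual ℝ L,
          (∀ x ∈ c, α x = 0) ∧ p = (ξ + s α, ξ - s α)} := by
  classical
  set S : Set (L × L) :=
    {p : L × L | ∃ ξ ∈ c, ∃ α : Module.Dual ℝ L,
      (∀ x ∈ c, α x = 0) ∧ p = (ξ + s α, ξ - s α)} with hS
  have hadd : ∀ p ∈ S, ∀ q ∈ S, p + q ∈ S := by
    rintro p ⟨ξ, hξ, α, hα, rfl⟩ q ⟨η, hη, β, hβ, rfl⟩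
    refine ⟨ξ + η, c.add_mem hξ hη, α + β, fun x hx => by simp [hα x hx, hβ x hx], ?_⟩
    ext <;> simp <;> abel
  let P : Submodule ℝ (L × L) :=
    { carrier := S
      add_mem' := fun hp hq => hadd _ hp _ hq
      zero_mem' := ⟨0, c.zero_mem, 0, fun x _ => rfl, by ext <;> simp⟩
      smul_mem' := by
        rintro t p ⟨ξ, hξ, α, hα, rfl⟩
        refine ⟨t • ξ, c.smul_mem t hξ, t • α, fun x hx => by simp [hα x hx], ?_⟩
        ext <;> simp [smul_add, smul_sub] }
  have hlie : ∀ p ∈ S, ∀ q ∈ S, ⁅p, q⁆ ∈ S := by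
    rintro p ⟨ξ, hξ, α, hα, rfl⟩ q ⟨η, hη, β, hβ, rfl⟩
    refine ⟨⁅ξ, η⁆ + ⁅s α, s β⁆, c.add_mem (c.lie_mem hξ hη) (hred α β hα hβ),
      coad ξ β - coad η α, ?_, ?_⟩
    · intro x hx
      have h1 : coad ξ β x = 0 := by
        simp [coad, hβ _ (c.lie_mem hξ hx)]
      have h2 : coad η α x = 0 := by
        simp [coad, hα _ (c.lie_mem hη hx)]
      simp [h1, h2]
    · have e1 : ⁅ξ, s β⁆ = s (coad ξ β) := hinv ξ β
      have e2 : ⁅η, s α⁆ = s (coad η α) := hinv η α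
      ext
      · show ⁅ξ + s α, η + s β⁆ = ⁅ξ, η⁆ + ⁅s α, s β⁆ + s (coad ξ β - coad η α)
        rw [map_sub, ← e1, ← e2, lie_add, add_lie, add_lie]
        rw [show ⁅s α, η⁆ = -⁅η, s α⁆ by rw [← lie_skew]]
        abel
      · show ⁅ξ - s α, η - s β⁆ = ⁅ξ, η⁆ + ⁅s α, s β⁆ - s (coad ξ β - coad η α)
        rw [map_sub, ← e1, ← e2, lie_sub, sub_lie, sub_lie]
        rw [show ⁅s α, η⁆ = -⁅η, s α⁆ by rw [← lie_skew]]
        abel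
  refine ⟨{ toSubmodule := P, lie_mem' := fun hp hq => hlie _ hp _ hq }, rfl⟩
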